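/- In the path graph G(P) of a set P of n ≥ 5 points in convex position, every vertex representing a non-boundary path (a path containing at least one diagonal) has degree strictly less than 3n-7. -/

import Mathlib

namespace PG

/-- The `k`-th vertex (mod `n`) of the convex polygon. -/
def pt (n : ℕ) (hn : 0 < n) (k : ℕ) : Fin n := ⟨k % n, Nat.mod_lt _ hn⟩

/-- `e` is a boundary (convex hull) edge of the convex `n`-gon. -/
def IsHullEdge {n : ℕ} (e : Sym2 (Fin n)) : Prop :=
  ∃ a b : Fin n, e = s(a, b) ∧ ((a.val + 1) % n = b.val ∨ (b.val + 1) % n = a.val)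

instance {n : ℕ} : DecidablePred (IsHullEdge (n := n)) := fun _ => by
  unfold IsHullEdge; infer_instance

/-- Two chords of the convex `n`-gon cross (intersect in interior points):
their endpoint pairs are all distinct and separate each other in the cyclic order. -/
def Crosses {n : ℕ} (e f : Sym2 (Fin n)) : Prop :=
  ∃ a b c d : Fin n, e = s(a, b) ∧ f = s(c, d) ∧
    a ≠ b ∧ c ≠ d ∧ a ≠ c ∧ a ≠ d ∧ b ≠ c ∧ b ≠ d ∧
    (((c.val + n - a.val) % n < (b.val + n - a.val) % n) ↔
      ¬((d.val + n - a.val) % n < (b.val + n - a.val) % n))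

instance {n : ℕ} (e f : Sym2 (Fin n)) : Decidable (Crosses e f) := by
  unfold Crosses; infer_instance

/-- The edge set of the spanning path visiting the points in the order given
by the permutation `p`. -/
def pathEdges {n : ℕ} (p : Equiv.Perm (Fin n)) : Finset (Sym2 (Fin n)) :=
  Finset.univ.filter (fun e => ∃ i j : Fin n, e = s(p i, p j) ∧ j.val = i.val + 1)

/-- `E` is the edge set of a non-crossing (plane) spanning path. -/
def IsNCPath {n : ℕ} (E : Finset (Sym2 (Fin n))) : Prop :=
  (∃ p : Equiv.Perm (Fin n), E = pathEdges p) ∧ ∀ e ∈ E, ∀ f ∈ E, ¬ Crosses e f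

instance {n : ℕ} : DecidablePred (IsNCPath (n := n)) := fun _ => by
  unfold IsNCPath pathEdges; infer_instance

/-- Vertices of the path graph `G(P)`: non-crossing spanning paths. -/
def PVert (n : ℕ) := {E : Finset (Sym2 (Fin n)) // IsNCPath E}

instance {n : ℕ} : Fintype (PVert n) := Subtype.fintype _
instance {n : ℕ} : DecidableEq (PVert n) := Subtype.instDecidableEq

/-- The path graph `G(P)`: two plane spanning paths are adjacent iff their
edge sets differ in exactly two edges. -/
def pathGraph (n : ℕ) : SimpleGraph (PVert n) where
  Adj u v := u ≠ v ∧ (u.1 \ v.1 ∪ v.1 \ u.1).card = 2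
  symm := ⟨by rintro u v ⟨h1, h2⟩; exact ⟨h1.symm, by rwa [Finset.union_comm]⟩⟩
  loopless := ⟨by rintro u ⟨h, _⟩; exact h rfl⟩

instance {n : ℕ} : DecidableRel (pathGraph n).Adj := fun u v => by
  unfold pathGraph; infer_instance

/-- `v` is a boundary path: all its edges are hull edges. -/
def IsBoundary {n : ℕ} (v : PVert n) : Prop := ∀ e ∈ v.1, IsHullEdge e

/-- Number of diagonals (the level) of a path. -/
def diagCount {n : ℕ} (v : PVert n) : ℕ :=
  (v.1.filter (fun e => ¬ IsHullEdge e)).card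

/-- Degree of a point in an edge set. -/
def degIn {n : ℕ} (E : Finset (Sym2 (Fin n))) (x : Fin n) : ℕ :=
  (E.filter (fun e => x ∈ e)).card

variable {n : ℕ}

lemma pt_eq (hn : 0 < n) {m : ℕ} (h : m < n) : pt n hn m = ⟨m, h⟩ := by
  simp [pt, Nat.mod_eq_of_lt h]

lemma pt_add_n (hn : 0 < n) (m : ℕ) : pt n hn (m + n) = pt n hn m := by
  simp [pt, Nat.add_mod_right]

/-- Edge number `i` of the path given by `p`. -/
def eIdx (hn : 0 < n) (p : Equiv.Perm (Fin n)) (i : ℕ) : Sym2 (Fin n) :=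
  s(p (pt n hn i), p (pt n hn (i + 1)))

lemma pathEdges_eq (hn : 0 < n) (p : Equiv.Perm (Fin n)) :
    pathEdges p = (Finset.range (n - 1)).image (eIdx hn p) := by
  ext e
  simp only [pathEdges, Finset.mem_filter, Finset.mem_univ, true_and, Finset.mem_image,
    Finset.mem_range]
  constructor
  · rintro ⟨i, j, rfl, hj⟩
    refine ⟨i.val, by omega, ?_⟩
    have h1 : i.val < n := i.isLt
    have h2 : j.val < n := j.isLt
    have : i.val < n - 1 := by omega
    rw [eIdx, pt_eq hn (by omega : i.val < n), pt_eq hn (by omega : i.val + 1 < n)]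
    exact congrArg₂ (fun x y => s(x, y)) (congrArg p (Fin.ext rfl))
      (congrArg p (Fin.ext hj.symm))
  · rintro ⟨i, hi, rfl⟩
    exact ⟨pt n hn i, pt n hn (i+1), rfl, by
      rw [pt_eq hn (by omega : i < n), pt_eq hn (by omega : i + 1 < n)]⟩

lemma sym2_eq_iff {α} (a b c d : α) :
    s(a, b) = s(c, d) ↔ (a = c ∧ b = d) ∨ (a = d ∧ b = c) := Sym2.eq_iff

lemma eIdx_injOn (hn : 0 < n) (p : Equiv.Perm (Fin n)) {i j : ℕ}
    (hi : i < n - 1) (hj : j < n - 1) (h : eIdx hn p i = eIdx hn p j) : i = j := by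
  rw [eIdx, eIdx, pt_eq hn (by omega : i < n), pt_eq hn (by omega : i + 1 < n),
    pt_eq hn (by omega : j < n), pt_eq hn (by omega : j + 1 < n), sym2_eq_iff] at h
  rcases h with ⟨h1, h2⟩ | ⟨h1, h2⟩
  · have := congrArg Fin.val (p.injective h1); simpa using this
  · have a1 := congrArg Fin.val (p.injective h1)
    have a2 := congrArg Fin.val (p.injective h2)
    simp only [Fin.val] at a1 a2
    omega

lemma card_pathEdges (hn : 0 < n) (p : Equiv.Perm (Fin n)) :
    (pathEdges p).card = n - 1 := by
  rw [pathEdges_eq hn p, Finset.card_image_of_injOn, Finset.card_range]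
  intro i hi j hj h
  exact eIdx_injOn hn p (Finset.mem_range.1 hi) (Finset.mem_range.1 hj) h

lemma mem_pathEdges (hn : 0 < n) (p : Equiv.Perm (Fin n)) (e : Sym2 (Fin n)) :
    e ∈ pathEdges p ↔ ∃ i < n - 1, e = eIdx hn p i := by
  rw [pathEdges_eq hn p]
  simp only [Finset.mem_image, Finset.mem_range]
  exact ⟨fun ⟨i, h1, h2⟩ => ⟨i, h1, h2.symm⟩, fun ⟨i, h1, h2⟩ => ⟨i, h1, h2.symm⟩⟩

lemma mem_eIdx_iff (hn : 0 < n) (p : Equiv.Perm (Fin n)) {i : ℕ} (hi : i < n - 1)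
    (x : Fin n) : x ∈ eIdx hn p i ↔ (p.symm x).val = i ∨ (p.symm x).val = i + 1 := by
  rw [eIdx, pt_eq hn (by omega : i < n), pt_eq hn (by omega : i + 1 < n), Sym2.mem_iff]
  constructor
  · rintro (rfl | rfl) <;> simp
  · rintro (h | h)
    · left; rw [show (⟨i, by omega⟩ : Fin n) = p.symm x from (Fin.ext h).symm]; simp
    · right; rw [show (⟨i + 1, by omega⟩ : Fin n) = p.symm x from (Fin.ext h).symm]; simp

lemma degIn_pathEdges (hn : 0 < n) (p : Equiv.Perm (Fin n)) (x : Fin n) :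
    degIn (pathEdges p) x =
      ((Finset.range (n - 1)).filter
        (fun i => (p.symm x).val = i ∨ (p.symm x).val = i + 1)).card := by
  rw [degIn, pathEdges_eq hn p, Finset.filter_image, Finset.card_image_of_injOn]
  · congr 1
    ext i
    simp only [Finset.mem_filter, Finset.mem_range, and_congr_right_iff]
    intro hi
    exact mem_eIdx_iff hn p hi x
  · intro i hi j hj h
    simp only [Finset.coe_filter, Set.mem_setOf_eq, Finset.mem_range] at hi hj
    exact eIdx_injOn hn p hi.1 hj.1 h

lemma degIn_le_two (hn : 0 < n) (p : Equiv.Perm (Fin n)) (x : Fin n) :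
    degIn (pathEdges p) x ≤ 2 := by
  rw [degIn_pathEdges hn p x]
  set m := (p.symm x).val with hm
  calc ((Finset.range (n - 1)).filter (fun i => m = i ∨ m = i + 1)).card
      ≤ ({m, m - 1} : Finset ℕ).card := by
        apply Finset.card_le_card
        intro i hi
        simp only [Finset.mem_filter, Finset.mem_range] at hi
        simp only [Finset.mem_insert, Finset.mem_singleton]
        omega
    _ ≤ 2 := Finset.card_insert_le _ _ |>.trans (by simp)

lemma degIn_eq_two (hn : 0 < n) (p : Equiv.Perm (Fin n)) (x : Fin n)
    (h1 : 0 < (p.symm x).val) (h2 : (p.symm x).val < n - 1) :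
    degIn (pathEdges p) x = 2 := by
  rw [degIn_pathEdges hn p x]
  set m := (p.symm x).val with hm
  have : (Finset.range (n - 1)).filter (fun i => m = i ∨ m = i + 1) = {m, m - 1} := by
    ext i
    simp only [Finset.mem_filter, Finset.mem_range, Finset.mem_insert, Finset.mem_singleton]
    omega
  rw [this, Finset.card_insert_of_notMem (by simp; omega), Finset.card_singleton]

/-- Discrete intermediate value: a decidable predicate that changes value
between `a` and `b` changes at some consecutive pair. -/
lemma exists_flip (P : ℕ → Prop) [DecidablePred P] {a b : ℕ} (hab : a ≤ b)
    (ha : P a) (hb : ¬ P b) : ∃ t, a ≤ t ∧ t < b ∧ P t ∧ ¬ P (t + 1) := by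
  induction b with
  | zero =>
    exact absurd (show P 0 from (by omega : a = 0) ▸ ha) hb
  | succ b ih =>
    rcases Nat.lt_or_ge a (b + 1) with h | h
    · by_cases hPb : P b
      · exact ⟨b, by omega, by omega, hPb, hb⟩
      · obtain ⟨t, h1, h2, h3, h4⟩ := ih (by omega) hPb
        exact ⟨t, h1, by omega, h3, h4⟩
    · exact absurd (show P (b + 1) from (by omega : a = b + 1) ▸ ha) hb

/-- Cyclic position of `x` as seen from `a`. -/
def cpos (n : ℕ) (a x : Fin n) : ℕ := (x.val + n - a.val) % n

lemma cpos_lt (a x : Fin n) : cpos n a x < n := by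
  have h : 0 < n := by have := a.isLt; omega
  exact Nat.mod_lt _ h

lemma cpos_self (a : Fin n) : cpos n a a = 0 := by
  have ha : a.val < n := a.isLt
  unfold cpos
  rw [show a.val + n - a.val = n from by omega, Nat.mod_self]

lemma val_eq_of_cpos (a x : Fin n) : x.val = (cpos n a x + a.val) % n := by
  have ha : a.val < n := a.isLt
  have hx : x.val < n := x.isLt
  unfold cpos
  rw [Nat.mod_add_mod, show x.val + n - a.val + a.val = x.val + n from by omega,
    Nat.add_mod_right, Nat.mod_eq_of_lt hx]

lemma cpos_injective (a : Fin n) {x y : Fin n} (h : cpos n a x = cpos n a y) : x = y := by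
  apply Fin.ext
  rw [val_eq_of_cpos a x, val_eq_of_cpos a y, h]

lemma cpos_pt (hn : 0 < n) (a : Fin n) (m : ℕ) (hm : m < n) :
    cpos n a (pt n hn (a.val + m)) = m := by
  have ha : a.val < n := a.isLt
  have hptv : (pt n hn (a.val + m)).val = (a.val + m) % n := rfl
  unfold cpos
  rw [hptv]
  have hle : a.val ≤ (a.val + m) % n + n := by
    have := Nat.mod_lt (a.val + m) hn; omega
  have key : ((a.val + m) % n + n - a.val + a.val) % n = (m + a.val) % n := by
    rw [show (a.val + m) % n + n - a.val + a.val = (a.val + m) % n + n from by omega,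
      Nat.add_mod_right, Nat.mod_mod_of_dvd _ dvd_rfl, Nat.add_comm]
  have h2 : (a.val + m) % n + n - a.val ≡ m [MOD n] :=
    (Nat.ModEq.add_right_cancel' a.val key)
  calc ((a.val + m) % n + n - a.val) % n = m % n := h2
    _ = m := Nat.mod_eq_of_lt hm

/-- If `x` lies strictly inside the arc from `a` to `b` and `y` strictly outside,
then the chord `xy` crosses the chord `ab`. -/
lemma crosses_of_sep {a b x y : Fin n} (hx0 : 0 < cpos n a x)
    (hxb : cpos n a x < cpos n a b) (hby : cpos n a b < cpos n a y) :
    Crosses s(a, b) s(x, y) := by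
  refine ⟨a, b, x, y, rfl, rfl, ?_, ?_, ?_, ?_, ?_, ?_, ?_⟩
  · intro h; rw [h, cpos_self] at hxb; omega
  · intro h; rw [h] at hxb; omega
  · intro h; rw [← h, cpos_self] at hx0; omega
  · intro h; rw [← h, cpos_self] at hby; omega
  · intro h; rw [← h] at hxb; omega
  · intro h; rw [← h] at hby; omega
  · show cpos n a x < cpos n a b ↔ ¬ (cpos n a y < cpos n a b)
    constructor
    · intro _; omega
    · intro _; exact hxb

lemma degIn_union_single {E : Finset (Sym2 (Fin n))} {f : Sym2 (Fin n)} (hf : f ∉ E)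
    {x : Fin n} (hx : x ∈ f) : degIn (E ∪ {f}) x = degIn E x + 1 := by
  unfold degIn
  rw [Finset.filter_union, Finset.filter_singleton, if_pos hx,
    Finset.card_union_of_disjoint (by simp [Finset.disjoint_singleton_right, hf]),
    Finset.card_singleton]

lemma degIn_erase_of_not_mem {E : Finset (Sym2 (Fin n))} {e : Sym2 (Fin n)}
    {x : Fin n} (hx : x ∉ e) : degIn (E.erase e) x = degIn E x := by
  unfold degIn
  congr 1
  ext g
  simp only [Finset.mem_filter, Finset.mem_erase, and_congr_left_iff]
  intro hg
  constructor
  · exact fun h => h.2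
  · intro h
    exact ⟨fun he => hx (he ▸ hg), h⟩

lemma exists_cross_edge (hn : 0 < n) (q : Equiv.Perm (Fin n)) (R : Fin n → Prop)
    [DecidablePred R] {x y : Fin n} (hx : R x) (hy : ¬ R y) :
    ∃ u1 u2 : Fin n, s(u1, u2) ∈ pathEdges q ∧ R u1 ∧ ¬ R u2 := by
  set ix := (q.symm x).val with hix
  set iy := (q.symm y).val with hiy
  have hqx : q (pt n hn ix) = x := by
    rw [pt_eq hn (q.symm x).isLt]
    simp [hix]
  have hqy : q (pt n hn iy) = y := by
    rw [pt_eq hn (q.symm y).isLt]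
    simp [hiy]
  have hixlt : ix < n := (q.symm x).isLt
  have hiylt : iy < n := (q.symm y).isLt
  have hne : ix ≠ iy := by
    intro h
    rw [h, hqy] at hqx
    exact hy (hqx ▸ hx)
  rcases Nat.lt_or_ge ix iy with hlt | hge
  · obtain ⟨t, h1, h2, h3, h4⟩ := exists_flip (fun i => R (q (pt n hn i))) (le_of_lt hlt)
      (by simp only [hqx]; exact hx) (by simp only [hqy]; exact hy)
    exact ⟨q (pt n hn t), q (pt n hn (t + 1)),
      (mem_pathEdges hn q _).2 ⟨t, by omega, rfl⟩, h3, h4⟩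
  · have hlt : iy < ix := by omega
    obtain ⟨t, h1, h2, h3, h4⟩ := exists_flip (fun i => ¬ R (q (pt n hn i))) (le_of_lt hlt)
      (by simp only [hqy]; exact hy)
      (by simp only [hqx]; simpa using hx)
    refine ⟨q (pt n hn (t + 1)), q (pt n hn t), ?_, by simpa using h4, h3⟩
    rw [Sym2.eq_swap]
    exact (mem_pathEdges hn q _).2 ⟨t, by omega, rfl⟩

lemma candidate_mem (hn : 0 < n) (p : Equiv.Perm (Fin n)) {k : ℕ} (hk : k < n - 1)
    {f : Sym2 (Fin n)} (hf : f ∉ pathEdges p)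
    (hu : IsNCPath ((pathEdges p).erase (eIdx hn p k) ∪ {f})) :
    ∃ a b : ℕ, (a = 0 ∨ a = k) ∧ (b = k + 1 ∨ b = n - 1) ∧
      f = s(p (pt n hn a), p (pt n hn b)) := by
  obtain ⟨⟨q, hq⟩, _⟩ := hu
  set u : Finset (Sym2 (Fin n)) := (pathEdges p).erase (eIdx hn p k) ∪ {f} with hudef
  -- the side predicate
  set R : Fin n → Prop := fun z => (p.symm z).val ≤ k with hR
  have hRdec : DecidablePred R := fun z => by unfold R; infer_instance
  have hx : R (p (pt n hn 0)) := by
    unfold R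
    rw [pt_eq hn (by omega : 0 < n)]
    simp
  have hy : ¬ R (p (pt n hn (n - 1))) := by
    unfold R
    rw [pt_eq hn (by omega : n - 1 < n)]
    simp
    omega
  obtain ⟨u1, u2, hmem, hRu1, hRu2⟩ := exists_cross_edge hn q R hx hy
  rw [← hq] at hmem
  -- the crossing edge must be `f`
  have hfeq : f = s(u1, u2) := by
    rcases Finset.mem_union.1 hmem with hmem' | hmem'
    · exfalso
      obtain ⟨hne, hmemp⟩ := Finset.mem_erase.1 hmem'
      obtain ⟨j, hj, hej⟩ := (mem_pathEdges hn p _).1 hmemp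
      have hjk : j ≠ k := fun h => hne (h ▸ hej)
      have h1 : u1 ∈ eIdx hn p j := hej ▸ (by simp : u1 ∈ s(u1, u2))
      have h2 : u2 ∈ eIdx hn p j := hej ▸ (by simp : u2 ∈ s(u1, u2))
      rw [mem_eIdx_iff hn p hj] at h1 h2
      unfold R at hRu1 hRu2
      omega
    · exact (Finset.mem_singleton.1 hmem').symm
  -- degree bounds
  have hfu : f ∉ (pathEdges p).erase (eIdx hn p k) :=
    fun h => hf (Finset.mem_of_mem_erase h)
  have hdeg : ∀ z : Fin n, z ∈ f →
      degIn ((pathEdges p).erase (eIdx hn p k)) z ≤ 1 := by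
    intro z hz
    have h1 : degIn u z ≤ 2 := by rw [hq]; exact degIn_le_two hn q z
    rw [hudef, degIn_union_single hfu hz] at h1
    omega
  set A := (p.symm u1).val with hA
  set B := (p.symm u2).val with hB
  have hAk : A ≤ k := hRu1
  have hBk : k + 1 ≤ B := by unfold R at hRu2; omega
  have hBn : B < n := (p.symm u2).isLt
  -- A ∈ {0, k}
  have hAcase : A = 0 ∨ A = k := by
    by_contra hc
    push_neg at hc
    have hA1 : 0 < A := by omega
    have hA2 : A < n - 1 := by omega
    have hnm : u1 ∉ eIdx hn p k := by
      rw [mem_eIdx_iff hn p hk]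
      omega
    have := hdeg u1 (hfeq ▸ (by simp : u1 ∈ s(u1, u2)))
    rw [degIn_erase_of_not_mem hnm, degIn_eq_two hn p u1 hA1 hA2] at this
    omega
  -- B ∈ {k+1, n-1}
  have hBcase : B = k + 1 ∨ B = n - 1 := by
    by_contra hc
    push_neg at hc
    have hB1 : 0 < B := by omega
    have hB2 : B < n - 1 := by omega
    have hnm : u2 ∉ eIdx hn p k := by
      rw [mem_eIdx_iff hn p hk]
      omega
    have := hdeg u2 (hfeq ▸ (by simp : u2 ∈ s(u1, u2)))
    rw [degIn_erase_of_not_mem hnm, degIn_eq_two hn p u2 hB1 hB2] at this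
    omega
  refine ⟨A, B, hAcase, hBcase, ?_⟩
  rw [hfeq]
  have e1 : p (pt n hn A) = u1 := by
    rw [pt_eq hn (by omega : A < n)]
    have : (⟨A, by omega⟩ : Fin n) = p.symm u1 := Fin.ext rfl
    rw [this]; simp
  have e2 : p (pt n hn B) = u2 := by
    rw [pt_eq hn (by omega : B < n)]
    have : (⟨B, by omega⟩ : Fin n) = p.symm u2 := Fin.ext rfl
    rw [this]; simp
  rw [e1, e2]

lemma add_mod_mod (a b : ℕ) : (a + b % n) % n = (a + b) % n := by
  rw [Nat.add_mod, Nat.mod_mod_of_dvd _ dvd_rfl, ← Nat.add_mod]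

lemma pt_mod (hn : 0 < n) (m : ℕ) : pt n hn m = pt n hn (m % n) := by
  apply Fin.ext
  show m % n = m % n % n
  rw [Nat.mod_mod_of_dvd _ dvd_rfl]

/-- Every cyclically-consecutive edge is a path edge or the closing edge. -/
lemma cycle_edge (hn : 0 < n) (p : Equiv.Perm (Fin n)) (m : ℕ) :
    s(p (pt n hn m), p (pt n hn (m + 1))) ∈ pathEdges p ∨
      s(p (pt n hn m), p (pt n hn (m + 1))) = s(p (pt n hn 0), p (pt n hn (n - 1))) := by
  have hmn : m % n < n := Nat.mod_lt _ hn
  rcases Nat.lt_or_ge (m % n) (n - 1) with hr | hr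
  · left
    rw [mem_pathEdges hn p]
    refine ⟨m % n, hr, ?_⟩
    rw [eIdx, pt_mod hn m]
    have h2 : pt n hn (m + 1) = pt n hn (m % n + 1) := by
      apply Fin.ext
      show (m + 1) % n = (m % n + 1) % n
      rw [Nat.mod_add_mod]
    rw [h2]
  · right
    have hm1 : m % n = n - 1 := by omega
    have h1 : pt n hn m = pt n hn (n - 1) := by
      apply Fin.ext
      show m % n = (n - 1) % n
      rw [hm1, Nat.mod_eq_of_lt (by omega)]
    have h2 : pt n hn (m + 1) = pt n hn 0 := by
      apply Fin.ext
      show (m + 1) % n = 0 % n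
      rw [← Nat.mod_add_mod, hm1, show n - 1 + 1 = n from by omega, Nat.mod_self,
        Nat.zero_mod]
    rw [h1, h2, Sym2.eq_swap]

/-- Surjectivity of the cyclic enumeration starting at position `j + 1`. -/
lemma cycle_surj (hn : 0 < n) (p : Equiv.Perm (Fin n)) (j : ℕ) (x : Fin n) :
    ∃ t, t < n ∧ p (pt n hn (j + 1 + t)) = x := by
  set s := (p.symm x).val with hs
  have hsn : s < n := (p.symm x).isLt
  have hj1 : (j + 1) % n < n := Nat.mod_lt _ hn
  refine ⟨(s + n - (j + 1) % n) % n, Nat.mod_lt _ hn, ?_⟩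
  have : pt n hn (j + 1 + (s + n - (j + 1) % n) % n) = p.symm x := by
    apply Fin.ext
    show (j + 1 + (s + n - (j + 1) % n) % n) % n = s
    rw [add_mod_mod, ← Nat.mod_add_mod,
      show (j + 1) % n + (s + n - (j + 1) % n) = s + n from by omega,
      Nat.add_mod_right, Nat.mod_eq_of_lt hsn]
  rw [this]
  simp

/-- A non-crossing Hamiltonian cycle consists of hull edges only:
if the closing edge `p₀ pₙ₋₁` crosses no path edge and the path is non-crossing,
then every path edge is a hull edge. -/
lemma hull_of_noncross (hn5 : 5 ≤ n) (hn : 0 < n) (p : Equiv.Perm (Fin n))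
    (hNC : ∀ e ∈ pathEdges p, ∀ f ∈ pathEdges p, ¬ Crosses e f)
    (hcross : ∀ e ∈ pathEdges p,
      ¬ Crosses e s(p (pt n hn 0), p (pt n hn (n - 1)))) :
    ∀ e ∈ pathEdges p, IsHullEdge e := by
  intro e he
  by_contra hhull
  obtain ⟨j, hj, rfl⟩ := (mem_pathEdges hn p e).1 he
  set a := p (pt n hn j) with ha
  set b := p (pt n hn (j + 1)) with hb
  set δ := cpos n a b with hδ
  have haj : (pt n hn j).val = j := by rw [pt_eq hn (by omega : j < n)]
  have hbj : (pt n hn (j + 1)).val = j + 1 := by rw [pt_eq hn (by omega : j + 1 < n)]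
  have hab : a ≠ b := by
    intro h
    have := p.injective h
    rw [Fin.ext_iff, haj, hbj] at this
    omega
  have hδ0 : δ ≠ 0 := by
    intro h
    exact hab (cpos_injective a (by rw [← hδ, h, cpos_self]))
  have hδn : δ < n := cpos_lt a b
  have hbval : b.val = (δ + a.val) % n := val_eq_of_cpos a b
  -- not a hull edge constrains δ
  have hδ1 : δ ≠ 1 := by
    intro h
    apply hhull
    refine ⟨a, b, rfl, Or.inl ?_⟩
    rw [hbval, h, Nat.add_comm]
  have hδn1 : δ ≠ n - 1 := by
    intro h
    apply hhull
    refine ⟨a, b, rfl, Or.inr ?_⟩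
    rw [hbval, h, Nat.mod_add_mod, show n - 1 + a.val + 1 = a.val + n from by omega,
      Nat.add_mod_right, Nat.mod_eq_of_lt a.isLt]
  have hδ2 : 2 ≤ δ := by omega
  have hδn2 : δ ≤ n - 2 := by omega
  -- the cyclic enumeration
  set c : ℕ → Fin n := fun t => p (pt n hn (j + 1 + t)) with hc
  have hc0 : c 0 = b := by rw [hc]
  have hcn1 : c (n - 1) = a := by
    show p (pt n hn (j + 1 + (n - 1))) = a
    rw [show j + 1 + (n - 1) = j + n from by omega, pt_add_n]
  -- interior cycle points avoid a and b
  have hint : ∀ t, 1 ≤ t → t ≤ n - 2 → c t ≠ a ∧ c t ≠ b := by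
    intro t h1 h2
    have hv : (pt n hn (j + 1 + t)).val = (j + 1 + t) % n := rfl
    have hmod : (j + 1 + t < n ∧ (j + 1 + t) % n = j + 1 + t) ∨
        (n ≤ j + 1 + t ∧ (j + 1 + t) % n = j + 1 + t - n) := by
      rcases Nat.lt_or_ge (j + 1 + t) n with h | h
      · exact Or.inl ⟨h, Nat.mod_eq_of_lt h⟩
      · refine Or.inr ⟨h, ?_⟩
        rw [Nat.mod_eq_sub_mod h, Nat.mod_eq_of_lt (by omega)]
    constructor
    · intro hEq
      have := p.injective hEq
      rw [Fin.ext_iff, hv, haj] at this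
      rcases hmod with ⟨h, h'⟩ | ⟨h, h'⟩ <;> rw [h'] at this <;> omega
    · intro hEq
      have := p.injective hEq
      rw [Fin.ext_iff, hv, hbj] at this
      rcases hmod with ⟨h, h'⟩ | ⟨h, h'⟩ <;> rw [h'] at this <;> omega
  have hcpos : ∀ t, 1 ≤ t → t ≤ n - 2 → cpos n a (c t) ≠ 0 ∧ cpos n a (c t) ≠ δ := by
    intro t h1 h2
    obtain ⟨hca, hcb⟩ := hint t h1 h2
    constructor
    · intro h
      exact hca (cpos_injective a (by rw [h, cpos_self]))
    · intro h
      exact hcb (cpos_injective a (by rw [h, ← hδ]))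
  -- find points at cyclic positions 1 and δ + 1
  obtain ⟨t1, ht1n, ht1⟩ := cycle_surj hn p j (pt n hn (a.val + 1))
  obtain ⟨t2, ht2n, ht2⟩ := cycle_surj hn p j (pt n hn (a.val + (δ + 1)))
  have hp1 : cpos n a (c t1) = 1 := by
    rw [hc]
    show cpos n a (p (pt n hn (j + 1 + t1))) = 1
    rw [ht1]
    exact cpos_pt hn a 1 (by omega)
  have hp2 : cpos n a (c t2) = δ + 1 := by
    rw [hc]
    show cpos n a (p (pt n hn (j + 1 + t2))) = δ + 1
    rw [ht2]
    exact cpos_pt hn a (δ + 1) (by omega)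
  have ht1r : 1 ≤ t1 ∧ t1 ≤ n - 2 := by
    constructor
    · rcases Nat.eq_zero_or_pos t1 with h | h
      · exfalso
        rw [h, hc0] at hp1
        rw [← hδ] at hp1
        omega
      · exact h
    · by_contra h
      have : t1 = n - 1 := by omega
      rw [this, hcn1] at hp1
      rw [cpos_self] at hp1
      omega
  have ht2r : 1 ≤ t2 ∧ t2 ≤ n - 2 := by
    constructor
    · rcases Nat.eq_zero_or_pos t2 with h | h
      · exfalso
        rw [h, hc0] at hp2
        rw [← hδ] at hp2
        omega
      · exact h
    · by_contra h
      have : t2 = n - 1 := by omega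
      rw [this, hcn1] at hp2
      rw [cpos_self] at hp2
      omega
  have ht12 : t1 ≠ t2 := by
    intro h
    rw [h, hp2] at hp1
    omega
  -- find a transition and the crossing edge
  have key : ∃ t, 1 ≤ t ∧ t + 1 ≤ n - 2 ∧ ∃ x y : Fin n,
      s(x, y) = s(c t, c (t + 1)) ∧ 0 < cpos n a x ∧ cpos n a x < δ ∧ δ < cpos n a y := by
    rcases Nat.lt_or_ge t1 t2 with hlt | hge
    · obtain ⟨t, hta, htb, hQ, hnQ⟩ := exists_flip (fun t => cpos n a (c t) < δ)
        (le_of_lt hlt) (by omega) (by omega)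
      refine ⟨t, by omega, by omega, c t, c (t + 1), rfl, ?_, hQ, ?_⟩
      · have := hcpos t (by omega) (by omega)
        omega
      · have := hcpos (t + 1) (by omega) (by omega)
        omega
    · have hlt : t2 < t1 := by omega
      obtain ⟨t, hta, htb, hQ, hnQ⟩ := exists_flip (fun t => ¬ cpos n a (c t) < δ)
        (le_of_lt hlt) (by omega) (by omega)
      refine ⟨t, by omega, by omega, c (t + 1), c t, Sym2.eq_swap, ?_, ?_, ?_⟩
      · have := hcpos (t + 1) (by omega) (by omega)
        omega
      · simp only [not_not] at hnQ
        exact hnQ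
      · have := hcpos t (by omega) (by omega)
        omega
  obtain ⟨t, ht1', ht2', x, y, hxy, hx0, hxδ, hδy⟩ := key
  have hcr : Crosses s(a, b) s(x, y) := crosses_of_sep hx0 (hδ ▸ hxδ) (hδ ▸ hδy)
  have hedge := cycle_edge hn p (j + 1 + t)
  rw [show (j + 1 + t) + 1 = j + 1 + (t + 1) from by omega] at hedge
  have hcc : s(c t, c (t + 1)) = s(p (pt n hn (j + 1 + t)), p (pt n hn (j + 1 + (t + 1)))) := rfl
  rcases hedge with hmem | heq
  · exact hNC _ he _ (by rw [← hcc, ← hxy] at hmem; exact hmem) (by rw [hxy, hcc]; exact (hxy ▸ hcr))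
  · apply hcross _ he
    rw [← heq, ← hcc, ← hxy]
    exact hcr

lemma singleton_head {α : Type*} [DecidableEq α] {s : Finset α} {x : α} (h : s = {x})
    (d : α) : s.toList.head?.getD d = x := by
  rw [h, Finset.toList_singleton]
  rfl

/-- In `G(P)` with `n ≥ 5` points in convex position, every non-boundary path
(containing at least one diagonal) has degree strictly less than `3n - 7`. -/
theorem nonboundary_degree_lt (n : ℕ) (hn : 5 ≤ n) (v : PVert n)
    (hv : ¬ IsBoundary v) :
    (pathGraph n).degree v < 3 * n - 7 := by
  have hn0 : 0 < n := by omega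
  obtain ⟨⟨p, hp⟩, hNCv⟩ := v.2
  rw [hp] at hNCv
  set f3 : Sym2 (Fin n) := s(p (pt n hn0 0), p (pt n hn0 (n - 1))) with hf3
  set C : ℕ → Finset (Sym2 (Fin n)) := fun k =>
    if k = 0 ∨ k = n - 2 then {f3}
    else {s(p (pt n hn0 0), p (pt n hn0 (k + 1))), s(p (pt n hn0 k), p (pt n hn0 (n - 1))), f3}
    with hC
  have hf3C : ∀ k, f3 ∈ C k := by
    intro k
    by_cases h : k = 0 ∨ k = n - 2 <;> simp [hC, h]
  -- every neighbor decomposes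
  have hnbr : ∀ u : PVert n, (pathGraph n).Adj v u →
      ∃ k < n - 1, ∃ f ∈ C k, v.1 \ u.1 = {eIdx hn0 p k} ∧ u.1 \ v.1 = {f} ∧
        u.1 = (pathEdges p).erase (eIdx hn0 p k) ∪ {f} := by
    intro u hadj
    obtain ⟨hne, hcard⟩ := hadj
    obtain ⟨⟨q, hq⟩, hNCu⟩ := u.2
    have hvc : v.1.card = n - 1 := by rw [hp]; exact card_pathEdges hn0 p
    have huc : u.1.card = n - 1 := by rw [hq]; exact card_pathEdges hn0 q
    have hcomm : (v.1 \ u.1).card = (u.1 \ v.1).card :=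
      Finset.card_sdiff_comm (hvc.trans huc.symm)
    have hdisj : Disjoint (v.1 \ u.1) (u.1 \ v.1) := disjoint_sdiff_sdiff
    rw [Finset.card_union_of_disjoint hdisj] at hcard
    have h1 : (v.1 \ u.1).card = 1 := by omega
    have h2 : (u.1 \ v.1).card = 1 := by omega
    obtain ⟨e, he⟩ := Finset.card_eq_one.1 h1
    obtain ⟨f, hf⟩ := Finset.card_eq_one.1 h2
    have hev : e ∈ v.1 ∧ e ∉ u.1 := by
      have : e ∈ v.1 \ u.1 := he ▸ Finset.mem_singleton_self e
      exact ⟨(Finset.mem_sdiff.1 this).1, (Finset.mem_sdiff.1 this).2⟩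
    have hfu : f ∈ u.1 ∧ f ∉ v.1 := by
      have : f ∈ u.1 \ v.1 := hf ▸ Finset.mem_singleton_self f
      exact ⟨(Finset.mem_sdiff.1 this).1, (Finset.mem_sdiff.1 this).2⟩
    have hmeme : ∀ g, (g ∈ v.1 ∧ g ∉ u.1) ↔ g = e := by
      intro g
      rw [← Finset.mem_sdiff, he, Finset.mem_singleton]
    have hmemf : ∀ g, (g ∈ u.1 ∧ g ∉ v.1) ↔ g = f := by
      intro g
      rw [← Finset.mem_sdiff, hf, Finset.mem_singleton]
    have hu1 : u.1 = v.1.erase e ∪ {f} := by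
      ext g
      rw [Finset.mem_union, Finset.mem_erase, Finset.mem_singleton]
      constructor
      · intro hg
        by_cases hgv : g ∈ v.1
        · left
          refine ⟨fun hge => ?_, hgv⟩
          exact ((hmeme g).2 hge).2 hg
        · right
          exact (hmemf g).1 ⟨hg, hgv⟩
      · rintro (⟨hge, hgv⟩ | rfl)
        · by_contra hgu
          exact hge ((hmeme g).1 ⟨hgv, hgu⟩)
        · exact hfu.1
    obtain ⟨k, hk, hek⟩ := (mem_pathEdges hn0 p e).1 (hp ▸ hev.1)
    have hfnp : f ∉ pathEdges p := hp ▸ hfu.2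
    have hncu2 : IsNCPath ((pathEdges p).erase (eIdx hn0 p k) ∪ {f}) := by
      have : u.1 = (pathEdges p).erase (eIdx hn0 p k) ∪ {f} := by
        rw [hu1, hp, hek]
      exact this ▸ u.2
    obtain ⟨a, b, hA, hB, hab⟩ := candidate_mem hn0 p hk hfnp hncu2
    refine ⟨k, hk, f, ?_, hek ▸ he, hf, by rw [hu1, hp, hek]⟩
    -- f lies in the candidate set
    have hfne : ∀ m, m < n - 1 → f ≠ eIdx hn0 p m := by
      intro m hm hEq
      exact hfnp ((mem_pathEdges hn0 p f).2 ⟨m, hm, hEq⟩)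
    rcases eq_or_ne k 0 with hk0 | hk0
    · subst hk0
      have ha0 : a = 0 := by rcases hA with h | h <;> exact h
      have hb1 : b = n - 1 := by
        rcases hB with hb | hb
        · exfalso
          apply hfne 0 (by omega)
          rw [hab, ha0, hb]
          rfl
        · exact hb
      have hCk : C 0 = {f3} := by simp [hC]
      rw [hCk, Finset.mem_singleton, hab, ha0, hb1]
    · rcases eq_or_ne k (n - 2) with hk2 | hk2
      · subst hk2
        have hb1 : b = n - 1 := by rcases hB with h | h <;> omega
        have ha0 : a = 0 := by
          rcases hA with h | h
          · exact h
          · exfalso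
            apply hfne (n - 2) hk
            have hnn : n - 2 + 1 = n - 1 := by omega
            rw [hab, h, hb1, eIdx, hnn]
        have hCk : C (n - 2) = {f3} := by simp [hC]
        rw [hCk, Finset.mem_singleton, hab, ha0, hb1]
      · have hCk : C k = {s(p (pt n hn0 0), p (pt n hn0 (k + 1))),
            s(p (pt n hn0 k), p (pt n hn0 (n - 1))), f3} := by
          simp [hC, hk0, hk2]
        rw [hCk]
        simp only [Finset.mem_insert, Finset.mem_singleton]
        rcases hA with ha0 | hak
        · rcases hB with hbk | hbn
          · left; rw [hab, ha0, hbk]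
          · right; right; rw [hab, ha0, hbn]
        · rcases hB with hbk | hbn
          · exfalso
            apply hfne k hk
            rw [hab, hak, hbk]
            rfl
          · right; left; rw [hab, hak, hbn]
  -- the target finset of candidate pairs
  set T : Finset (Sym2 (Fin n) × Sym2 (Fin n)) :=
    (Finset.range (n - 1)).biUnion
      (fun k => ({eIdx hn0 p k} : Finset (Sym2 (Fin n))) ×ˢ C k) with hT
  have hTcard : T.card ≤ 3 * n - 7 := by
    calc T.card ≤ ∑ k ∈ Finset.range (n - 1),
        (({eIdx hn0 p k} : Finset (Sym2 (Fin n))) ×ˢ C k).card := Finset.card_biUnion_le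
      _ = ∑ k ∈ Finset.range (n - 1), (C k).card := by
          apply Finset.sum_congr rfl
          intro k _
          rw [Finset.card_product, Finset.card_singleton, one_mul]
      _ ≤ ∑ k ∈ Finset.range (n - 1), (if k = 0 ∨ k = n - 2 then 1 else 3) := by
          apply Finset.sum_le_sum
          intro k _
          by_cases h : k = 0 ∨ k = n - 2
          · rw [if_pos h]
            have : C k = {f3} := by rcases h with h | h <;> simp [hC, h]
            rw [this, Finset.card_singleton]
          · rw [if_neg h]
            push_neg at h
            have : C k = {s(p (pt n hn0 0), p (pt n hn0 (k + 1))),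
                s(p (pt n hn0 k), p (pt n hn0 (n - 1))), f3} := by
              simp [hC, h.1, h.2]
            rw [this]
            refine (Finset.card_insert_le _ _).trans (Nat.succ_le_succ ?_)
            refine (Finset.card_insert_le _ _).trans (Nat.succ_le_succ ?_)
            simp
      _ = 3 * n - 7 := by
          have hsplit : Finset.range (n - 1) =
              insert 0 (insert (n - 2) (Finset.Ico 1 (n - 2))) := by
            ext x
            simp only [Finset.mem_range, Finset.mem_insert, Finset.mem_Ico]
            omega
          have h0 : (0 : ℕ) ∉ insert (n - 2) (Finset.Ico 1 (n - 2)) := by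
            simp only [Finset.mem_insert, Finset.mem_Ico]
            omega
          have h2 : (n - 2) ∉ Finset.Ico 1 (n - 2) := by
            simp only [Finset.mem_Ico]
            omega
          rw [hsplit, Finset.sum_insert h0, Finset.sum_insert h2,
            if_pos (Or.inl rfl), if_pos (Or.inr rfl)]
          have hconst : ∑ x ∈ Finset.Ico 1 (n - 2), (if x = 0 ∨ x = n - 2 then 1 else 3) =
              ∑ _x ∈ Finset.Ico 1 (n - 2), 3 := by
            apply Finset.sum_congr rfl
            intro x hx
            rw [Finset.mem_Ico] at hx
            rw [if_neg (by omega)]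
          rw [hconst, Finset.sum_const, Nat.card_Ico, smul_eq_mul]
          omega
  -- the map from neighbours to pairs
  set F : PVert n → Sym2 (Fin n) × Sym2 (Fin n) := fun u =>
    ((v.1 \ u.1).toList.head?.getD f3, (u.1 \ v.1).toList.head?.getD f3) with hF
  have hmapsto : ∀ u : PVert n, (pathGraph n).Adj v u →
      ∃ k < n - 1, ∃ f ∈ C k, F u = (eIdx hn0 p k, f) ∧
        u.1 = (pathEdges p).erase (eIdx hn0 p k) ∪ {f} := by
    intro u h
    obtain ⟨k, hk, f, hfC, hsd1, hsd2, hu1⟩ := hnbr u h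
    refine ⟨k, hk, f, hfC, ?_, hu1⟩
    rw [hF]
    simp only
    rw [singleton_head hsd1, singleton_head hsd2]
  have hdeg : (pathGraph n).degree v = ((pathGraph n).neighborFinset v).card := rfl
  by_cases hbad : ∃ k0, 1 ≤ k0 ∧ k0 ≤ n - 3 ∧
      ¬ IsNCPath ((pathEdges p).erase (eIdx hn0 p k0) ∪ {f3})
  · obtain ⟨k0, hk01, hk03, hbadNC⟩ := hbad
    have hk0lt : k0 < n - 1 := by omega
    have hmaps : ∀ u ∈ (pathGraph n).neighborFinset v,
        F u ∈ T.erase (eIdx hn0 p k0, f3) := by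
      intro u hu
      rw [SimpleGraph.mem_neighborFinset] at hu
      obtain ⟨k, hk, f, hfC, hFu, hu1⟩ := hmapsto u hu
      rw [Finset.mem_erase]
      constructor
      · intro hEq
        rw [hFu, Prod.mk.injEq] at hEq
        have hkk : k = k0 := eIdx_injOn hn0 p hk hk0lt hEq.1
        apply hbadNC
        rw [← hkk, ← hEq.2, ← hu1]
        exact u.2
      · rw [hFu, hT, Finset.mem_biUnion]
        exact ⟨k, Finset.mem_range.2 hk,
          Finset.mem_product.2 ⟨Finset.mem_singleton_self _, hfC⟩⟩
    have hinj : Set.InjOn F ((pathGraph n).neighborFinset v : Set (PVert n)) := by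
      intro u hu u' hu' hEq
      rw [Finset.mem_coe, SimpleGraph.mem_neighborFinset] at hu hu'
      obtain ⟨k, hk, f, hfC, hFu, hu1⟩ := hmapsto u hu
      obtain ⟨k', hk', f', hfC', hFu', hu1'⟩ := hmapsto u' hu'
      rw [hFu, hFu', Prod.mk.injEq] at hEq
      have hkk : k = k' := eIdx_injOn hn0 p hk hk' hEq.1
      apply Subtype.ext
      rw [hu1, hu1', hkk, hEq.2]
    have hle : ((pathGraph n).neighborFinset v).card ≤ (T.erase (eIdx hn0 p k0, f3)).card :=
      Finset.card_le_card_of_injOn F hmaps hinj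
    have hmem : (eIdx hn0 p k0, f3) ∈ T := by
      rw [hT, Finset.mem_biUnion]
      exact ⟨k0, Finset.mem_range.2 hk0lt,
        Finset.mem_product.2 ⟨Finset.mem_singleton_self _, hf3C k0⟩⟩
    rw [Finset.card_erase_of_mem hmem] at hle
    rw [hdeg]
    omega
  · exfalso
    push_neg at hbad
    have hcross : ∀ e ∈ pathEdges p, ¬ Crosses e f3 := by
      intro e he
      obtain ⟨j, hj, rfl⟩ := (mem_pathEdges hn0 p e).1 he
      set k0 : ℕ := if j = 1 then 2 else 1 with hk0def
      have hk0p : 1 ≤ k0 ∧ k0 ≤ n - 3 ∧ k0 ≠ j := by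
        rw [hk0def]
        split_ifs with h <;> omega
      obtain ⟨-, hNCe⟩ := hbad k0 hk0p.1 hk0p.2.1
      apply hNCe (eIdx hn0 p j) ?_ f3 ?_
      · apply Finset.mem_union_left
        rw [Finset.mem_erase]
        refine ⟨?_, he⟩
        intro hEq
        exact hk0p.2.2 (eIdx_injOn hn0 p hj (by omega) hEq).symm
      · exact Finset.mem_union_right _ (Finset.mem_singleton_self _)
    have hhull := hull_of_noncross hn hn0 p hNCv hcross
    apply hv
    intro e he'
    rw [hp] at he'
    exact hhull e he'

end PG
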